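/- Let H be a real separable Hilbert space, A : H → H a bounded linear operator, T > 0, let a : [0,T] → ℝ be continuously differentiable with derivative ȧ and c := a(0) ≠ 0, and let w : [0,T] → H be continuous. Suppose X : [0,T] → H is continuous and satisfies X(t) = ∫₀ᵗ a(t-τ) A(X(τ)) dτ + w(t) for all t ∈ [0,T]. Then for all t ∈ [0,T], X(t) = A( ∫₀ᵗ exp(c(t-τ)A) [ ∫₀^τ ȧ(τ-σ) X(σ) dσ + c·w(τ) ] dτ ) + w(t). -/

import Mathlib

open MeasureTheory Set Function intervalIntegral

set_option synthInstance.maxHeartbeats 1000000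
set_option maxHeartbeats 1600000

theorem aux_tri_swap {H : Type*} [NormedAddCommGroup H] [NormedSpace ℝ H]
    (F : ℝ → ℝ → H) (hF : Continuous (uncurry F)) {t : ℝ} (ht : 0 ≤ t) :
    (∫ τ in (0:ℝ)..t, ∫ s in τ..t, F s τ) = ∫ s in (0:ℝ)..t, ∫ τ in (0:ℝ)..s, F s τ := by
  set μ := volume.restrict (Ioc (0:ℝ) t) with hμ
  set f : ℝ → ℝ → H := fun s τ => (Iic s).indicator (fun τ' => F s τ') τ with hf
  have hS : MeasurableSet {p : ℝ × ℝ | p.2 ≤ p.1} :=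
    (isClosed_le continuous_snd continuous_fst).measurableSet
  have huf : uncurry f = ({p : ℝ × ℝ | p.2 ≤ p.1}).indicator (uncurry F) := by
    funext p
    by_cases h : p.2 ≤ p.1 <;> simp [hf, uncurry, indicator, h]
  have hint : Integrable (uncurry f) (μ.prod μ) := by
    rw [hμ, Measure.prod_restrict, huf]
    apply Integrable.indicator _ hS
    have h1 : IntegrableOn (uncurry F) (Icc (0:ℝ) t ×ˢ Icc (0:ℝ) t)
        (volume.prod volume) := by
      rw [← Measure.volume_eq_prod]
      exact hF.continuousOn.integrableOn_compact (isCompact_Icc.prod isCompact_Icc)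
    exact h1.mono_set (prod_mono Ioc_subset_Icc_self Ioc_subset_Icc_self)
  have swap := integral_integral_swap (f := fun τ s => f s τ) (μ := μ) (ν := μ)
    (hint.swap.congr (by rw [hμ]; rfl))
  have hL : (∫ τ in (0:ℝ)..t, ∫ s in τ..t, F s τ) = ∫ τ, (∫ s, f s τ ∂μ) ∂μ := by
    rw [integral_of_le ht]
    apply setIntegral_congr_fun measurableSet_Ioc
    intro τ hτ
    have h1 : ∀ s, f s τ = (Ici τ).indicator (fun s' => F s' τ) s := by
      intro s
      by_cases h : τ ≤ s <;> simp [hf, indicator, h]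
    have h2 : Ici τ ∩ Ioc 0 t = Icc τ t := by
      ext s
      simp only [mem_inter_iff, mem_Ici, mem_Ioc, mem_Icc]
      exact ⟨fun ⟨u1, _, u3⟩ => ⟨u1, u3⟩, fun ⟨u1, u2⟩ => ⟨u1, lt_of_lt_of_le hτ.1 u1, u2⟩⟩
    calc ∫ s in τ..t, F s τ = ∫ s in Ioc τ t, F s τ := integral_of_le hτ.2
      _ = ∫ s in Icc τ t, F s τ := (integral_Icc_eq_integral_Ioc).symm
      _ = ∫ s in Ici τ ∩ Ioc 0 t, F s τ := by rw [h2]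
      _ = ∫ s, f s τ ∂μ := by
          rw [hμ, ← Measure.restrict_restrict measurableSet_Ici,
            ← MeasureTheory.integral_indicator measurableSet_Ici]
          exact integral_congr_ae (Filter.Eventually.of_forall fun s => (h1 s).symm)
  have hR : (∫ s in (0:ℝ)..t, ∫ τ in (0:ℝ)..s, F s τ) = ∫ s, (∫ τ, f s τ ∂μ) ∂μ := by
    rw [integral_of_le ht]
    apply setIntegral_congr_fun measurableSet_Ioc
    intro s hs
    have h2 : Iic s ∩ Ioc 0 t = Ioc 0 s := by
      ext τ
      simp only [mem_inter_iff, mem_Iic, mem_Ioc]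
      exact ⟨fun ⟨u1, u2, _⟩ => ⟨u2, u1⟩, fun ⟨u1, u2⟩ => ⟨u2, u1, u2.trans hs.2⟩⟩
    calc ∫ τ in (0:ℝ)..s, F s τ = ∫ τ in Ioc 0 s, F s τ := integral_of_le hs.1.le
      _ = ∫ τ in Iic s ∩ Ioc 0 t, F s τ := by rw [h2]
      _ = ∫ τ, f s τ ∂μ := by
          rw [hμ, ← Measure.restrict_restrict measurableSet_Iic,
            ← MeasureTheory.integral_indicator measurableSet_Iic]
  rw [hL, hR]
  exact swap

theorem stmt_7 {H : Type*} [NormedAddCommGroup H] [InnerProductSpace ℝ H]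
    [TopologicalSpace.SeparableSpace H] [CompleteSpace H]
    (A : H →L[ℝ] H) (T : ℝ) (hT : 0 < T)
    (a a' : ℝ → ℝ)
    (ha : ∀ t ∈ Icc (0:ℝ) T, HasDerivWithinAt a (a' t) (Icc 0 T) t)
    (ha' : ContinuousOn a' (Icc 0 T))
    (hc : a 0 ≠ 0)
    (w : ℝ → H) (hw : ContinuousOn w (Icc 0 T))
    (X : ℝ → H) (hX : ContinuousOn X (Icc 0 T))
    (heq : ∀ t ∈ Icc (0:ℝ) T, X t = (∫ τ in (0:ℝ)..t, a (t - τ) • A (X τ)) + w t) :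
    ∀ t ∈ Icc (0:ℝ) T,
      X t = A (∫ τ in (0:ℝ)..t,
          (NormedSpace.exp ((a 0 * (t - τ)) • A))
            ((∫ σ in (0:ℝ)..τ, a' (τ - σ) • X σ) + a 0 • w τ)) + w t := by
  have haC : ContinuousOn a (Icc 0 T) := fun s hs => (ha s hs).continuousWithinAt
  set c := a 0 with hc0
  -- clamping retraction onto [0, T]
  set π : ℝ → ℝ := fun s => max 0 (min s T) with hπdef
  have hπc : Continuous π := continuous_const.max (continuous_id.min continuous_const)
  have hπmem : ∀ s, π s ∈ Icc (0:ℝ) T :=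
    fun s => ⟨le_max_left _ _, max_le hT.le (min_le_right _ _)⟩
  have hπid : ∀ s ∈ Icc (0:ℝ) T, π s = s := fun s hs => by
    simp [hπdef, min_eq_left hs.2, max_eq_right hs.1]
  set aP : ℝ → ℝ := fun s => a (π s) with haPdef
  set a'P : ℝ → ℝ := fun s => a' (π s) with ha'Pdef
  set XP : ℝ → H := fun s => X (π s) with hXPdef
  set wP : ℝ → H := fun s => w (π s) with hwPdef
  have haPc : Continuous aP := haC.comp_continuous hπc hπmem
  have ha'Pc : Continuous a'P := ha'.comp_continuous hπc hπmem
  have hXPc : Continuous XP := hX.comp_continuous hπc hπmem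
  have hwPc : Continuous wP := hw.comp_continuous hπc hπmem
  -- fundamental theorem of calculus for a
  have hFTC : ∀ r ∈ Icc (0:ℝ) T, (∫ u in (0:ℝ)..r, a'P u) = aP r - c := by
    intro r hr
    have hsub : Icc (0:ℝ) r ⊆ Icc 0 T := Icc_subset_Icc le_rfl hr.2
    have h1 : (∫ u in (0:ℝ)..r, a'P u) = ∫ u in (0:ℝ)..r, a' u := by
      apply integral_congr
      intro u hu
      rw [uIcc_of_le hr.1] at hu
      rw [ha'Pdef]; simp only; rw [hπid u (hsub hu)]
    have h2 : aP r = a r := by rw [haPdef]; simp only; rw [hπid r hr]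
    rw [h1, h2, hc0]
    exact integral_eq_sub_of_hasDeriv_right_of_le hr.1 (haC.mono hsub)
      (fun x hx => ((ha x ⟨hx.1.le, hx.2.le.trans hr.2⟩).hasDerivAt
        (Icc_mem_nhds hx.1 (lt_of_lt_of_le hx.2 hr.2))).hasDerivWithinAt)
      ((ha'.mono (by rw [uIcc_of_le hr.1]; exact hsub)).intervalIntegrable)
  -- kernel expansion
  have hker : ∀ t ∈ Icc (0:ℝ) T, ∀ τ ∈ Icc (0:ℝ) t,
      aP (t - τ) = c + ∫ s in τ..t, a'P (s - τ) := by
    intro t ht τ hτ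
    have h1 : (∫ s in τ..t, a'P (s - τ)) = ∫ u in (0:ℝ)..(t - τ), a'P u := by
      rw [integral_comp_sub_right (fun u => a'P u) τ, sub_self]
    have h2 : t - τ ∈ Icc (0:ℝ) T :=
      ⟨sub_nonneg.2 hτ.2, le_trans (sub_le_self t hτ.1) ht.2⟩
    rw [h1, hFTC _ h2]; ring
  -- the equation in clamped form
  have heqP : ∀ t ∈ Icc (0:ℝ) T,
      XP t = (∫ τ in (0:ℝ)..t, aP (t - τ) • A (XP τ)) + wP t := by
    intro t ht
    have e1 : XP t = X t := by rw [hXPdef]; simp only; rw [hπid t ht]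
    have e2 : wP t = w t := by rw [hwPdef]; simp only; rw [hπid t ht]
    rw [e1, e2, heq t ht]
    congr 1
    apply integral_congr
    intro τ hτ
    rw [uIcc_of_le ht.1] at hτ
    have hτT : τ ∈ Icc (0:ℝ) T := ⟨hτ.1, hτ.2.trans ht.2⟩
    have htτT : t - τ ∈ Icc (0:ℝ) T := ⟨sub_nonneg.2 hτ.2, le_trans (sub_le_self t hτ.1) ht.2⟩
    rw [haPdef, hXPdef]; simp only; rw [hπid _ htτT, hπid _ hτT]
  -- auxiliary functions
  set h : ℝ → H := fun s => ∫ τ in (0:ℝ)..s, a'P (s - τ) • XP τ with hhdef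
  have hhc : Continuous h := by
    apply continuous_parametric_intervalIntegral_of_continuous _ continuous_id
    exact ((ha'Pc.comp (continuous_fst.sub continuous_snd)).smul (hXPc.comp continuous_snd))
  set G : ℝ → H := fun τ => h τ + c • wP τ with hGdef
  have hGc : Continuous G := hhc.add (hwPc.const_smul c)
  set EE : ℝ → (H →L[ℝ] H) := fun r => NormedSpace.exp ((c * r) • A) with hEEdef
  have hEEc : Continuous EE :=
    (continuous_iff_continuousAt.2 fun x => (NormedSpace.exp_analytic (𝕂 := ℝ) x).continuousAt).comp (((continuous_const.mul continuous_id).smul continuous_const))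
  have hEE0 : EE 0 = 1 := by
    rw [hEEdef]; simp only [mul_zero, zero_smul]; exact NormedSpace.exp_zero
  set K : ℝ → (H →L[ℝ] H) := fun u => c • (A * EE u) with hKdef
  have hKc : Continuous K := (continuous_const.mul hEEc).const_smul c
  have hEder : ∀ r : ℝ, HasDerivAt EE (K r) r := by
    intro r
    have h1 : HasDerivAt (fun u : ℝ => NormedSpace.exp (u • A))
        (A * NormedSpace.exp ((c * r) • A)) (c * r) :=
      hasDerivAt_exp_smul_const' A (c * r)
    have h2 : HasDerivAt (fun s : ℝ => c * s) c r := by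
      simpa using (hasDerivAt_id r).const_mul c
    have h3 := HasDerivAt.scomp r h1 h2
    simpa [hEEdef, hKdef, Function.comp_def] using h3
  set P : ℝ → (H →L[ℝ] H) := fun r => ∫ u in (0:ℝ)..r, K u with hPdef
  have hPc : Continuous P := continuous_primitive (fun u v => hKc.intervalIntegrable u v) 0
  have hEP : ∀ r : ℝ, EE r = 1 + P r := by
    intro r
    have := integral_eq_sub_of_hasDerivAt (f := EE) (f' := K)
      (fun x _ => hEder x) (hKc.intervalIntegrable 0 r)
    rw [hPdef]; simp only; rw [this, hEE0]; abel
  set R : ℝ → H := fun t => ∫ τ in (0:ℝ)..t, EE (t - τ) (A (G τ)) with hRdef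
  have hRc : Continuous R := by
    apply continuous_parametric_intervalIntegral_of_continuous _ continuous_id
    exact (hEEc.comp (continuous_fst.sub continuous_snd)).clm_apply
      (A.continuous.comp (hGc.comp continuous_snd))
  -- equation (I)
  have eq1 : ∀ t ∈ Icc (0:ℝ) T,
      XP t - wP t = ∫ s in (0:ℝ)..t, (c • A (XP s - wP s) + A (G s)) := by
    intro t ht
    have ht0 : (0:ℝ) ≤ t := ht.1
    have hcoef : Continuous fun τ => ∫ s in τ..t, a'P (s - τ) := by
      have hrw : (fun τ => ∫ s in τ..t, a'P (s - τ))
          = fun τ => ∫ u in (0:ℝ)..(t - τ), a'P u := by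
        funext τ; rw [integral_comp_sub_right (fun u => a'P u) τ, sub_self]
      rw [hrw]
      exact (continuous_primitive (fun u v => ha'Pc.intervalIntegrable u v) 0).comp
        (continuous_const.sub continuous_id)
    have e1 : XP t - wP t = ∫ τ in (0:ℝ)..t, aP (t - τ) • A (XP τ) := by
      rw [heqP t ht]; abel
    have hi1 : IntervalIntegrable (fun τ => c • A (XP τ)) volume 0 t :=
      (show Continuous fun τ => c • A (XP τ) by fun_prop).intervalIntegrable 0 t
    have hi2 : IntervalIntegrable (fun τ => (∫ s in τ..t, a'P (s - τ)) • A (XP τ)) volume 0 t :=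
      (hcoef.smul (show Continuous fun τ => A (XP τ) by fun_prop)).intervalIntegrable 0 t
    have e2 : (∫ τ in (0:ℝ)..t, aP (t - τ) • A (XP τ))
        = (∫ τ in (0:ℝ)..t, c • A (XP τ))
          + ∫ τ in (0:ℝ)..t, (∫ s in τ..t, a'P (s - τ)) • A (XP τ) := by
      rw [← integral_add hi1 hi2]
      apply integral_congr
      intro τ hτ
      rw [uIcc_of_le ht0] at hτ
      dsimp only
      rw [hker t ht τ hτ, add_smul]
    have e3 : (∫ τ in (0:ℝ)..t, (∫ s in τ..t, a'P (s - τ)) • A (XP τ))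
        = ∫ τ in (0:ℝ)..t, ∫ s in τ..t, a'P (s - τ) • A (XP τ) := by
      apply integral_congr; intro τ _
      dsimp only
      rw [_root_.intervalIntegral.integral_smul_const]
    have e4 := aux_tri_swap (fun s τ => a'P (s - τ) • A (XP τ))
      (show Continuous fun p : ℝ × ℝ => a'P (p.1 - p.2) • A (XP p.2) by fun_prop) ht0
    have e5 : ∀ s : ℝ, (∫ τ in (0:ℝ)..s, a'P (s - τ) • A (XP τ)) = A (h s) := by
      intro s
      have hint : IntervalIntegrable (fun τ => a'P (s - τ) • XP τ) volume 0 s :=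
        (show Continuous fun τ => a'P (s - τ) • XP τ by fun_prop).intervalIntegrable 0 s
      rw [hhdef]; simp only
      rw [← A.intervalIntegral_comp_comm hint]
      apply integral_congr; intro τ _
      dsimp only
      rw [_root_.map_smul]
    have hi3 : IntervalIntegrable (fun s => A (h s)) volume 0 t :=
      (show Continuous fun s => A (h s) by fun_prop).intervalIntegrable 0 t
    calc XP t - wP t = (∫ τ in (0:ℝ)..t, c • A (XP τ)) + ∫ s in (0:ℝ)..t, A (h s) := by
          rw [e1, e2, e3, e4]; congr 1; exact integral_congr fun s _ => e5 s
      _ = ∫ s in (0:ℝ)..t, (c • A (XP s - wP s) + A (G s)) := by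
          rw [← _root_.intervalIntegral.integral_add hi1 hi3]
          apply integral_congr; intro s _
          dsimp only
          rw [hGdef]; dsimp only
          simp only [_root_.map_add, _root_.map_sub, _root_.map_smul, smul_sub]
          abel
  -- equation (II)
  have eq2 : ∀ t ∈ Icc (0:ℝ) T,
      R t = ∫ s in (0:ℝ)..t, (c • A (R s) + A (G s)) := by
    intro t ht
    have ht0 : (0:ℝ) ≤ t := ht.1
    have hiAG : IntervalIntegrable (fun τ => A (G τ)) volume 0 t :=
      (show Continuous fun τ => A (G τ) by fun_prop).intervalIntegrable 0 t
    have hPA : Continuous fun τ => P (t - τ) (A (G τ)) := by fun_prop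
    have e0 : R t = ∫ τ in (0:ℝ)..t, (A (G τ) + P (t - τ) (A (G τ))) := by
      rw [hRdef]; dsimp only
      apply integral_congr; intro τ _
      dsimp only
      rw [hEP (t - τ)]
      simp [ContinuousLinearMap.add_apply, ContinuousLinearMap.one_apply]
    have e1 : R t = (∫ τ in (0:ℝ)..t, A (G τ)) + ∫ τ in (0:ℝ)..t, P (t - τ) (A (G τ)) := by
      rw [e0, _root_.intervalIntegral.integral_add hiAG (hPA.intervalIntegrable 0 t)]
    have e2 : ∀ τ : ℝ, P (t - τ) (A (G τ)) = ∫ s in τ..t, (K (s - τ)) (A (G τ)) := by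
      intro τ
      have h1 : (∫ s in τ..t, K (s - τ)) = P (t - τ) := by
        rw [integral_comp_sub_right K τ, sub_self]
      have hKint : IntervalIntegrable (fun s => K (s - τ)) volume τ t :=
        (show Continuous fun s => K (s - τ) by fun_prop).intervalIntegrable τ t
      calc P (t - τ) (A (G τ))
          = (ContinuousLinearMap.apply ℝ H (A (G τ))) (∫ s in τ..t, K (s - τ)) := by
            rw [ContinuousLinearMap.apply_apply, h1]
        _ = ∫ s in τ..t, (ContinuousLinearMap.apply ℝ H (A (G τ))) (K (s - τ)) :=
            ((ContinuousLinearMap.apply ℝ H (A (G τ))).intervalIntegral_comp_comm hKint).symm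
        _ = ∫ s in τ..t, (K (s - τ)) (A (G τ)) :=
            integral_congr fun s _ => ContinuousLinearMap.apply_apply _ _
    have e3 : (∫ τ in (0:ℝ)..t, P (t - τ) (A (G τ)))
        = ∫ s in (0:ℝ)..t, ∫ τ in (0:ℝ)..s, (K (s - τ)) (A (G τ)) := by
      rw [show (∫ τ in (0:ℝ)..t, P (t - τ) (A (G τ)))
          = ∫ τ in (0:ℝ)..t, ∫ s in τ..t, (K (s - τ)) (A (G τ)) from
        integral_congr fun τ _ => e2 τ]
      exact aux_tri_swap (fun s τ => (K (s - τ)) (A (G τ)))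
        (show Continuous fun p : ℝ × ℝ => (K (p.1 - p.2)) (A (G p.2)) by fun_prop) ht0
    have e4 : ∀ s : ℝ, (∫ τ in (0:ℝ)..s, (K (s - τ)) (A (G τ))) = c • A (R s) := by
      intro s
      have hint : IntervalIntegrable (fun τ => EE (s - τ) (A (G τ))) volume 0 s :=
        (show Continuous fun τ => EE (s - τ) (A (G τ)) by fun_prop).intervalIntegrable 0 s
      calc (∫ τ in (0:ℝ)..s, (K (s - τ)) (A (G τ)))
          = ∫ τ in (0:ℝ)..s, (c • A) (EE (s - τ) (A (G τ))) := by
            apply integral_congr; intro τ _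
            dsimp only
            rw [hKdef]; dsimp only
            rw [ContinuousLinearMap.smul_apply, ContinuousLinearMap.mul_apply,
              ContinuousLinearMap.smul_apply]
        _ = (c • A) (∫ τ in (0:ℝ)..s, EE (s - τ) (A (G τ))) :=
            (c • A).intervalIntegral_comp_comm hint
        _ = c • A (R s) := by rw [hRdef]; dsimp only; rw [ContinuousLinearMap.smul_apply]
    have hiAR : IntervalIntegrable (fun s => c • A (R s)) volume 0 t :=
      (show Continuous fun s => c • A (R s) by fun_prop).intervalIntegrable 0 t
    rw [e1, e3,
      show (∫ s in (0:ℝ)..t, ∫ τ in (0:ℝ)..s, (K (s - τ)) (A (G τ)))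
        = ∫ s in (0:ℝ)..t, c • A (R s) from integral_congr fun s _ => e4 s,
      ← _root_.intervalIntegral.integral_add hiAG hiAR]
    apply integral_congr; intro s _
    dsimp only
    abel
  -- uniqueness
  have key : ∀ t ∈ Icc (0:ℝ) T, XP t - wP t = R t := by
    set D : ℝ → H := fun s => XP s - wP s - R s with hDdef
    have hDc : Continuous D := (hXPc.sub hwPc).sub hRc
    have hDeq : ∀ t ∈ Icc (0:ℝ) T, D t = ∫ s in (0:ℝ)..t, (c • A) (D s) := by
      intro t ht
      have hj1 : IntervalIntegrable (fun s => c • A (XP s - wP s) + A (G s)) volume 0 t :=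
        (show Continuous fun s => c • A (XP s - wP s) + A (G s) by fun_prop).intervalIntegrable 0 t
      have hj2 : IntervalIntegrable (fun s => c • A (R s) + A (G s)) volume 0 t :=
        (show Continuous fun s => c • A (R s) + A (G s) by fun_prop).intervalIntegrable 0 t
      rw [hDdef]; dsimp only
      rw [eq1 t ht, eq2 t ht, ← integral_sub hj1 hj2]
      apply integral_congr; intro s _
      dsimp only
      simp only [ContinuousLinearMap.smul_apply, _root_.map_sub, smul_sub]
      abel
    have hΦc : Continuous fun s => (c • A) (D s) := by fun_prop
    have hDder : ∀ t ∈ Ico (0:ℝ) T, HasDerivWithinAt D ((c • A) (D t)) (Ici t) t := by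
      intro t htI
      have hΦ : HasDerivAt (fun u => ∫ s in (0:ℝ)..u, (c • A) (D s)) ((c • A) (D t)) t :=
        (hΦc.integral_hasStrictDerivAt 0 t).hasDerivAt
      apply hΦ.hasDerivWithinAt.congr_of_eventuallyEq
      · have h1 : ∀ᶠ s in nhdsWithin t (Ici t), s ∈ Iio T :=
          mem_nhdsWithin_of_mem_nhds (Iio_mem_nhds htI.2)
        have h2 : ∀ᶠ s in nhdsWithin t (Ici t), s ∈ Ici t := eventually_mem_nhdsWithin
        filter_upwards [h1, h2] with s hs1 hs2
        exact hDeq s ⟨le_trans htI.1 hs2, le_of_lt hs1⟩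
      · exact hDeq t ⟨htI.1, htI.2.le⟩
    have hD0 : D 0 = (fun _ : ℝ => (0:H)) 0 := by
      rw [hDeq 0 ⟨le_rfl, hT.le⟩, integral_same]
    have hzero : EqOn D (fun _ => (0:H)) (Icc 0 T) :=
      ODE_solution_unique (v := fun _ x => (c • A) x) (fun _ => (c • A).lipschitz)
        hDc.continuousOn hDder continuousOn_const
        (fun t _ => by
          simpa using (hasDerivWithinAt_const t (Ici t) (0:H)))
        hD0
    intro t ht
    have := hzero ht
    rw [hDdef] at this; dsimp only at this
    exact sub_eq_zero.mp this
  -- wrap-up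
  intro t ht
  have hAE : ∀ (r : ℝ) (v : H), A (EE r v) = EE r (A v) := by
    intro r v
    have hcomm : Commute (A : H →L[ℝ] H) (EE r) :=
      Commute.exp_right ((Commute.refl A).smul_right (c * r))
    calc A (EE r v) = ((A : H →L[ℝ] H) * EE r) v := rfl
      _ = (EE r * (A : H →L[ℝ] H)) v := by rw [hcomm.eq]
      _ = EE r (A v) := rfl
  have hconv : A (∫ τ in (0:ℝ)..t, (NormedSpace.exp ((c * (t - τ)) • A))
      ((∫ σ in (0:ℝ)..τ, a' (τ - σ) • X σ) + c • w τ)) = R t := by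
    have hstep1 : (∫ τ in (0:ℝ)..t, (NormedSpace.exp ((c * (t - τ)) • A))
        ((∫ σ in (0:ℝ)..τ, a' (τ - σ) • X σ) + c • w τ))
        = ∫ τ in (0:ℝ)..t, EE (t - τ) (G τ) := by
      apply integral_congr
      intro τ hτ
      rw [uIcc_of_le ht.1] at hτ
      have hτT : τ ∈ Icc (0:ℝ) T := ⟨hτ.1, hτ.2.trans ht.2⟩
      dsimp only
      show EE (t - τ) _ = EE (t - τ) (G τ)
      congr 1
      rw [hGdef, hhdef]; dsimp only
      congr 1
      · apply integral_congr
        intro σ hσ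
        rw [uIcc_of_le hτ.1] at hσ
        have hσT : σ ∈ Icc (0:ℝ) T := ⟨hσ.1, hσ.2.trans hτT.2⟩
        have hτσT : τ - σ ∈ Icc (0:ℝ) T :=
          ⟨sub_nonneg.2 hσ.2, le_trans (sub_le_self τ hσ.1) hτT.2⟩
        rw [ha'Pdef, hXPdef]; dsimp only
        rw [hπid _ hτσT, hπid _ hσT]
      · rw [hwPdef]; dsimp only; rw [hπid _ hτT]
    rw [hstep1, hRdef]; dsimp only
    have hint : IntervalIntegrable (fun τ => EE (t - τ) (G τ)) volume 0 t :=
      (show Continuous fun τ => EE (t - τ) (G τ) by fun_prop).intervalIntegrable 0 t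
    rw [← A.intervalIntegral_comp_comm hint]
    apply integral_congr; intro τ _
    dsimp only
    exact hAE (t - τ) (G τ)
  have e1 : XP t = X t := by rw [hXPdef]; simp only; rw [hπid t ht]
  have e2 : wP t = w t := by rw [hwPdef]; simp only; rw [hπid t ht]
  have := key t ht
  rw [e1, e2] at this
  rw [hconv]
  rw [← this]; abel
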